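/- arXiv:2312.02795 — 2 statements merged into one kernel-verified Lean document; each statement's English description precedes it below -/
import Mathlib

section
/- Let A ⊂ ℂⁿ∖{0} (n ≥ 2) be the punctured cone on a connected submanifold Y of ℙ^{n−1}, algebraically elliptic and not contained in any hyperplane of ℂⁿ, and let M be a smooth affine curve. If the tangent bundle TM is algebraically trivial (for example, if M has genus 1 or M is planar), then the pair (A, M) is good, i.e., the bundle 𝒜 ⊂ (T*M)^{⊕n} defined by A admits a regular section on M. -/
open Filter Topology Set
open scoped Manifold Topology

noncomputable section

/-! ### Algebraic preliminaries on cones in `ℂⁿ` -/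

/-- A tangent vector `w` to a set `A ⊆ ℂⁿ` at a point `z`, realized by a holomorphic curve. -/
def TangentVecAt {n : ℕ} (A : Set (Fin n → ℂ)) (z w : Fin n → ℂ) : Prop :=
  ∃ f : ℂ → Fin n → ℂ, DifferentiableAt ℂ f 0 ∧ f 0 = z ∧ deriv f 0 = w ∧
    ∀ᶠ c in 𝓝 (0 : ℂ), f c ∈ A

/-- `A ⊆ ℂⁿ` is algebraically elliptic: it admits a dominating algebraic spray
(on a trivial bundle). -/
def AlgebraicallyElliptic {n : ℕ} (A : Set (Fin n → ℂ)) : Prop :=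
  ∃ N : ℕ, ∃ s : (Fin n → ℂ) → (Fin N → ℂ) → (Fin n → ℂ),
    (∀ i : Fin n, ∃ p : MvPolynomial ((Fin n) ⊕ (Fin N)) ℂ,
      ∀ z v, s z v i = MvPolynomial.eval (Sum.elim z v) p) ∧
    (∀ z ∈ A, ∀ v, s z v ∈ A) ∧
    (∀ z ∈ A, s z 0 = z) ∧
    (∀ z ∈ A, ∀ w, TangentVecAt A z w → ∃ v, fderiv ℂ (s z) 0 v = w)

/-- `A` is the punctured cone in `ℂⁿ∖{0}` on a connected smooth submanifold of `ℙ^{n-1}`. -/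
structure IsPuncturedCone {n : ℕ} (A : Set (Fin n → ℂ)) : Prop where
  nonempty : A.Nonempty
  not_zero : (0 : Fin n → ℂ) ∉ A
  isClosed : IsClosed (insert (0 : Fin n → ℂ) A)
  cone : ∀ c : ℂ, c ≠ 0 → ∀ z ∈ A, c • z ∈ A
  connected : IsConnected A
  smooth : ∀ z ∈ A, ∃ (d : ℕ) (U : Set (Fin n → ℂ)), IsOpen U ∧ z ∈ U ∧
    ∃ f : (Fin n → ℂ) → (Fin d → ℂ), DifferentiableOn ℂ f U ∧
      (∀ w ∈ U, (w ∈ A ↔ f w = 0)) ∧ Function.Surjective (fderiv ℂ f z)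

/-- `A` is not contained in any (linear) hyperplane of `ℂⁿ`. -/
def NotInHyperplane {n : ℕ} (A : Set (Fin n → ℂ)) : Prop :=
  ∀ φ : (Fin n → ℂ) →ₗ[ℂ] ℂ, (∀ z ∈ A, φ z = 0) → φ = 0

/-! ### Riemann surfaces, holomorphic functions and 1-forms -/

variable {Mbar : Type*} [TopologicalSpace Mbar] [ChartedSpace ℂ Mbar]

/-- A map from a Riemann surface to a complex vector space is holomorphic on a set. -/
def HoloOn {E : Type*} [NormedAddCommGroup E] [NormedSpace ℂ E]
    (u : Mbar → E) (U : Set Mbar) : Prop :=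
  MDifferentiableOn 𝓘(ℂ, ℂ) 𝓘(ℂ, E) u U

/-- The derivative coefficient of `u` at `x`, computed in the preferred chart at `x`. -/
def mder {E : Type*} [NormedAddCommGroup E] [NormedSpace ℂ E]
    (u : Mbar → E) (x : Mbar) : E :=
  mfderiv 𝓘(ℂ, ℂ) 𝓘(ℂ, E) u x (1 : ℂ)

/-- `ω` (given by its coefficients in the preferred charts) is a holomorphic `(1,0)`-form
on `U`: near every point of `U` it is the differential of a holomorphic function. -/
def IsHolOneFormOn {E : Type*} [NormedAddCommGroup E] [NormedSpace ℂ E]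
    (ω : Mbar → E) (U : Set Mbar) : Prop :=
  ∀ x ∈ U, ∃ V ∈ 𝓝 x, ∃ u : Mbar → E, HoloOn u (V ∩ U) ∧ ∀ y ∈ V ∩ U, ω y = mder u y

/-- The derivative coefficient of the inverse of the preferred chart at `p`. -/
def chartDerCoeff (p : Mbar) (z : ℂ) : ℂ :=
  mfderiv 𝓘(ℂ, ℂ) 𝓘(ℂ, ℂ) ((chartAt ℂ p).symm) z (1 : ℂ)

/-- The local representative of the 1-form `ω` in the preferred chart at `p`
(the pullback of `ω` by the inverse of the chart). -/
def pullCoeff {E : Type*} [NormedAddCommGroup E] [NormedSpace ℂ E]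
    (ω : Mbar → E) (p : Mbar) (z : ℂ) : E :=
  chartDerCoeff p z • ω ((chartAt ℂ p).symm z)

/-- The 1-form `ω` extends meromorphically across the point `p`. -/
def MeroFormAt {E : Type*} [NormedAddCommGroup E] [NormedSpace ℂ E]
    (ω : Mbar → E) (p : Mbar) : Prop :=
  MeromorphicAt (pullCoeff ω p) (chartAt ℂ p p)

/-- The 1-form `ω` has an effective pole at `p`. -/
def FormPoleAt {E : Type*} [NormedAddCommGroup E] [NormedSpace ℂ E]
    (ω : Mbar → E) (p : Mbar) : Prop :=
  Tendsto (fun z => ‖pullCoeff ω p z‖) (𝓝[≠] ((chartAt ℂ p) p)) atTop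

/-- The function `u` extends meromorphically across the point `p`. -/
def MeroFunAt {E : Type*} [NormedAddCommGroup E] [NormedSpace ℂ E]
    (u : Mbar → E) (p : Mbar) : Prop :=
  MeromorphicAt (fun z => u ((chartAt ℂ p).symm z)) ((chartAt ℂ p) p)

/-- The function `u` has an effective pole at the point `p`. -/
def FunPoleAt {E : Type*} [NormedAddCommGroup E] [NormedSpace ℂ E]
    (u : Mbar → E) (p : Mbar) : Prop :=
  Tendsto (fun x => ‖u x‖) (𝓝[≠] p) atTop

/-- `K` is a compact set which is holomorphically convex in `U` (it equals its hull with
respect to the algebra of functions holomorphic on `U`). -/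
def HolConvexIn (K U : Set Mbar) : Prop :=
  K ⊆ U ∧ IsCompact K ∧
    ∀ x ∈ U, x ∉ K → ∃ f : Mbar → ℂ, HoloOn f U ∧ ∀ y ∈ K, ‖f y‖ < ‖f x‖

/-! ### Sections of the bundle `𝒜 ⊂ (T*M)^{⊕n}` defined by the cone `A` -/

variable {n : ℕ}

/-- A holomorphic section of the bundle `𝒜 ⊆ (T*M)^{⊕n}` determined by the cone `A` over the
set `U`: an `n`-tuple of holomorphic `(1,0)`-forms whose coefficient vector lies in `A`
(in particular the components have no common zeros and their ratio lies in `Y`). -/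
def SectionA (A : Set (Fin n → ℂ)) (ω : Mbar → Fin n → ℂ) (U : Set Mbar) : Prop :=
  IsHolOneFormOn ω U ∧ ∀ x ∈ U, ω x ∈ A

/-- A regular section of `𝒜` on the affine curve `M = Mbar ∖ ends`: a holomorphic section
whose component 1-forms extend meromorphically to the ends. -/
def RegularSectionA (A : Set (Fin n → ℂ)) (ω : Mbar → Fin n → ℂ) (ends : Finset Mbar) : Prop :=
  SectionA A ω {x | x ∉ ends} ∧ ∀ p ∈ ends, MeroFormAt ω p

/-- The 1-form `ω` is exact on `U`: it is the differential of a global holomorphic map. -/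
def ExactOn {E : Type*} [NormedAddCommGroup E] [NormedSpace ℂ E]
    (ω : Mbar → E) (U : Set Mbar) : Prop :=
  ∃ u : Mbar → E, HoloOn u U ∧ ∀ x ∈ U, ω x = mder u x

/-- `s` is a continuous section of `𝒜` over `U`: its values lie in `A` and its ratio with
some nowhere-vanishing holomorphic 1-form on `U` is continuous. -/
def ContSectionA (A : Set (Fin n → ℂ)) (s : Mbar → Fin n → ℂ) (U : Set Mbar) : Prop :=
  (∀ x ∈ U, s x ∈ A) ∧ ∃ θ : Mbar → ℂ, IsHolOneFormOn θ U ∧ (∀ x ∈ U, θ x ≠ 0) ∧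
    ContinuousOn (fun x => (θ x)⁻¹ • s x) U

/-- The sections `s` and `t` of `𝒜` are homotopic through continuous sections of `𝒜` over `U`. -/
def HomotopicSectionsOn (A : Set (Fin n → ℂ)) (s t : Mbar → Fin n → ℂ) (U : Set Mbar) : Prop :=
  ∃ θ : Mbar → ℂ, IsHolOneFormOn θ U ∧ (∀ x ∈ U, θ x ≠ 0) ∧
    ∃ H : ℝ → Mbar → Fin n → ℂ,
      (∀ x ∈ U, H 0 x = s x) ∧ (∀ x ∈ U, H 1 x = t x) ∧
      (∀ r ∈ Icc (0:ℝ) 1, ∀ x ∈ U, H r x ∈ A) ∧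
      ContinuousOn (fun q : ℝ × Mbar => (θ q.2)⁻¹ • H q.1 q.2) (Icc (0:ℝ) 1 ×ˢ U)

/-! ### Loops, periods, and period homomorphisms -/

/-- `γ` is a loop in `U` (parametrized by `[0,1]`). -/
def IsLoopIn (U : Set Mbar) (γ : ℝ → Mbar) : Prop :=
  ContinuousOn γ (Icc 0 1) ∧ γ 0 = γ 1 ∧ ∀ r ∈ Icc (0:ℝ) 1, γ r ∈ U

/-- `γ` is a (possibly closed) embedded arc in `U`. -/
def IsArcIn (U : Set Mbar) (γ : ℝ → Mbar) : Prop :=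
  ContinuousOn γ (Icc 0 1) ∧ InjOn γ (Ico 0 1) ∧ ∀ r ∈ Icc (0:ℝ) 1, γ r ∈ U

/-- The period `∫_γ ω = c` of the holomorphic 1-form `ω` along the path `γ`, defined by
analytic continuation of local primitives of `ω` along `γ`. -/
def HasPeriod {E : Type*} [NormedAddCommGroup E] [NormedSpace ℂ E]
    (ω : Mbar → E) (γ : ℝ → Mbar) (c : E) : Prop :=
  ∃ h : ℝ → E, h 1 - h 0 = c ∧ ∀ r ∈ Icc (0:ℝ) 1, ∃ V ∈ 𝓝 (γ r), ∃ u : Mbar → E,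
    HoloOn u V ∧ (∀ y ∈ V, ω y = mder u y) ∧ ∀ᶠ q in 𝓝[Icc (0:ℝ) 1] r, h q = u (γ q)

/-- Concatenation of two paths. -/
def loopConcat (γ₀ γ₁ : ℝ → Mbar) : ℝ → Mbar :=
  fun r => if r ≤ 1/2 then γ₀ (2*r) else γ₁ (2*r - 1)

/-- A free homotopy through loops in `U` between the loops `γ₀` and `γ₁`. -/
def LoopHomotopyIn (U : Set Mbar) (γ₀ γ₁ : ℝ → Mbar) : Prop :=
  ∃ H : ℝ × ℝ → Mbar, ContinuousOn H (Icc 0 1 ×ˢ Icc 0 1) ∧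
    (∀ r ∈ Icc (0:ℝ) 1, H (0, r) = γ₀ r ∧ H (1, r) = γ₁ r) ∧
    (∀ q ∈ Icc (0:ℝ) 1, H (q, 0) = H (q, 1)) ∧
    (∀ q ∈ Icc (0:ℝ) 1, ∀ r ∈ Icc (0:ℝ) 1, H (q, r) ∈ U)

/-- `F`, a function on loops in `U` with values in `E`, is induced by a group homomorphism
`H₁(U,ℤ) → E`: it is invariant under free homotopies of loops and additive under
concatenation of loops. -/
def PeriodHomomorphism {E : Type*} [NormedAddCommGroup E]
    (U : Set Mbar) (F : (ℝ → Mbar) → E) : Prop :=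
  (∀ γ₀ γ₁, IsLoopIn U γ₀ → IsLoopIn U γ₁ → LoopHomotopyIn U γ₀ γ₁ → F γ₀ = F γ₁) ∧
  (∀ γ₀ γ₁, IsLoopIn U γ₀ → IsLoopIn U γ₁ → γ₀ 1 = γ₁ 0 →
    F (loopConcat γ₀ γ₁) = F γ₀ + F γ₁)

/-! ### Directed immersions -/

/-- `u` is a holomorphic immersion on `U` directed by the cone `A` (an `A`-immersion):
its derivative in any local holomorphic coordinate takes values in `A`. -/
def AImmersionOn (A : Set (Fin n → ℂ)) (u : Mbar → Fin n → ℂ) (U : Set Mbar) : Prop :=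
  HoloOn u U ∧ ∀ x ∈ U, mder u x ∈ A

/-- `u : M → ℂⁿ` is a regular `A`-immersion of the affine curve `M = Mbar ∖ ends`. -/
def RegularAImmersion (A : Set (Fin n → ℂ)) (u : Mbar → Fin n → ℂ)
    (ends : Finset Mbar) : Prop :=
  AImmersionOn A u {x | x ∉ ends} ∧ ∀ p ∈ ends, MeroFunAt u p

/-- Proposition 1.4(c): if the tangent bundle of the smooth affine curve `M`
is algebraically trivial (equivalently, `M` carries a nowhere-vanishing regular 1-form),
then the pair `(A, M)` is good: `𝒜` admits a regular section on `M`. -/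
theorem statement_3 {n : ℕ} (hn : 2 ≤ n) (A : Set (Fin n → ℂ))
    (hA : IsPuncturedCone A) (hAell : AlgebraicallyElliptic A) (hAhyp : NotInHyperplane A)
    {Mbar : Type*} [TopologicalSpace Mbar] [ChartedSpace ℂ Mbar]
    [IsManifold 𝓘(ℂ, ℂ) (⊤ : ℕ∞) Mbar] [CompactSpace Mbar] [ConnectedSpace Mbar]
    [T2Space Mbar]
    (ends : Finset Mbar) (hends : ends.Nonempty)
    (hMconn : IsConnected {x : Mbar | x ∉ ends})
    -- `TM` is algebraically trivial: there is a nowhere-vanishing regular 1-form on `M`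
    (htriv : ∃ θ : Mbar → ℂ, IsHolOneFormOn θ {x : Mbar | x ∉ ends} ∧
      (∀ x ∉ ends, θ x ≠ 0) ∧ ∀ p ∈ ends, MeroFormAt θ p) :
    -- `(A, M)` is good
    ∃ t : Mbar → Fin n → ℂ, RegularSectionA A t ends := by
  obtain ⟨a, ha⟩ := hA.nonempty
  obtain ⟨θ, hθform, hθne, hθmero⟩ := htriv
  set L : ℂ →L[ℂ] (Fin n → ℂ) := (ContinuousLinearMap.id ℂ ℂ).smulRight a with hL
  refine ⟨fun x => θ x • a, ⟨?_, ?_⟩, ?_⟩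
  · -- holomorphic 1-form
    intro x hx
    obtain ⟨V, hV, u, huholo, hueq⟩ := hθform x hx
    refine ⟨V, hV, fun y => u y • a, ?_, ?_⟩
    · have h1 : MDifferentiableOn 𝓘(ℂ, ℂ) 𝓘(ℂ, Fin n → ℂ) (⇑L ∘ u) (V ∩ {x | x ∉ ends}) :=
        L.mdifferentiableOn.comp huholo Set.subset_preimage_univ
      have heq : (fun y => u y • a) = ⇑L ∘ u := by
        funext z; simp [hL]
      rw [HoloOn, heq]; exact h1
    · intro y hy
      have hy' : y ∈ {x : Mbar | x ∉ ends} := hy.2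
      have hθy : θ y ≠ 0 := hθne y hy'
      have hueqy := hueq y hy
      have hudiff : MDifferentiableAt 𝓘(ℂ, ℂ) 𝓘(ℂ, ℂ) u y := by
        by_contra h
        rw [hueqy] at hθy
        simp [mder, mfderiv_zero_of_not_mdifferentiableAt h] at hθy
        exact hθy rfl
      have hcomp : mfderiv 𝓘(ℂ, ℂ) 𝓘(ℂ, Fin n → ℂ) (L ∘ u) y
          = L.comp (mfderiv 𝓘(ℂ, ℂ) 𝓘(ℂ, ℂ) u y) := by
        rw [mfderiv_comp y L.mdifferentiableAt hudiff, L.mfderiv_eq]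
        rfl
      have heq : (fun y => u y • a) = L ∘ u := by
        funext z; simp [hL]
      show θ y • a = mder (fun y => u y • a) y
      rw [hueqy, mder, mder, heq, hcomp]
      rfl
  · -- values in A
    intro x hx
    exact hA.cone (θ x) (hθne x hx) a ha
  · -- meromorphic at the ends
    intro p hp
    have h1 : MeromorphicAt ((pullCoeff θ p) • (fun _ : ℂ => a)) ((chartAt ℂ p) p) :=
      (hθmero p hp).smul ((MeromorphicAt.const a _))
    refine h1.congr (Filter.Eventually.of_forall fun z => ?_)
    simp only [Pi.smul_apply', pullCoeff, smul_smul, smul_eq_mul]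
end
end

section
/- Let M be an open Riemann surface, A ⊂ ℂⁿ∖{0} (n ≥ 3) the punctured cone on a connected submanifold Y of ℙ^{n−1}, and 𝒜 the subbundle of (T*M)^{⊕n} defined by A. If A ∩ ℝⁿ = ∅, then every harmonic map φ: M → ℝⁿ whose (1,0)-differential ∂φ is a holomorphic section of 𝒜 is an immersion. More generally, a harmonic map φ = (φ₁,…,φₙ): M → ℝⁿ is an immersion if and only if |𝔥_φ| < |∂φ|² = Σᵢ|∂φᵢ|² everywhere on M, where 𝔥_φ = Σᵢ(∂φᵢ)² is the Hopf differential of φ; equivalently, if and only if ∂φ/θ takes values in ℂⁿ∖(ℂ·ℝⁿ) for any nowhere-vanishing holomorphic 1-form θ on M. -/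
open Filter Topology Set
open scoped Manifold Topology

noncomputable section

/-! ### Riemann surfaces, holomorphic functions and 1-forms -/

variable {Mbar : Type*} [TopologicalSpace Mbar] [ChartedSpace ℂ Mbar]

/-! ### Sections of the bundle `𝒜 ⊂ (T*M)^{⊕n}` defined by the cone `A` -/

variable {n : ℕ}

variable {n : ℕ} in
/-- `φ` is a harmonic map on `U` with `(1,0)`-differential `∂φ = ω`: near every point of `U`,
`φ` is (up to an additive constant) the real part of a holomorphic map `u` with `du = 2ω`. -/
def HarmonicWithDel (φ : Mbar → Fin n → ℝ) (ω : Mbar → Fin n → ℂ) (U : Set Mbar) : Prop :=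
  ∀ x ∈ U, ∃ V ∈ 𝓝 x, ∃ u : Mbar → Fin n → ℂ, HoloOn u (V ∩ U) ∧
    (∀ y ∈ V ∩ U, (2:ℂ) • ω y = mder u y) ∧
    ∃ c : Fin n → ℝ, ∀ y ∈ V ∩ U, ∀ k, φ y k = (u y k).re + c k

variable {n : ℕ} in
/-- The flux `∫_γ dᶜφ` of the harmonic map `φ` with `∂φ = ω` along the loop `γ` equals `v`;
here `∫_γ dᶜφ = Im ∫_γ 2∂φ`. -/
def HasFlux (ω : Mbar → Fin n → ℂ) (γ : ℝ → Mbar) (v : Fin n → ℝ) : Prop :=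
  ∃ c : Fin n → ℂ, HasPeriod (fun x => (2:ℂ) • ω x) γ c ∧ ∀ k, (c k).im = v k
variable {n : ℕ} in
/-- `φ` is an immersion at `x`: its differential there (computed in the preferred chart)
is injective. -/
def RealImmersionAt (φ : Mbar → Fin n → ℝ) (x : Mbar) : Prop :=
  Function.Injective (fderiv ℝ (fun z : ℂ => φ ((chartAt ℂ x).symm z)) ((chartAt ℂ x) x))

/-- The set `ℂ·ℝⁿ ⊆ ℂⁿ` of complex multiples of real vectors. -/
def ComplexRealCone (n : ℕ) : Set (Fin n → ℂ) :=
  {z | ∃ (c : ℂ) (r : Fin n → ℝ), z = c • fun k => (r k : ℂ)}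


/-! ### Auxiliary lemmas for Statement 18 -/

lemma cone_smul_mem {n : ℕ} {z : Fin n → ℂ} (c : ℂ) (hz : z ∈ ComplexRealCone n) :
    c • z ∈ ComplexRealCone n := by
  obtain ⟨c', r, rfl⟩ := hz
  exact ⟨c * c', r, (smul_smul c c' _)⟩

lemma cone_smul_iff {n : ℕ} {z : Fin n → ℂ} {c : ℂ} (hc : c ≠ 0) :
    c • z ∈ ComplexRealCone n ↔ z ∈ ComplexRealCone n := by
  constructor
  · intro h
    have := cone_smul_mem c⁻¹ h
    rwa [smul_smul, inv_mul_cancel₀ hc, one_smul] at this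
  · exact cone_smul_mem c

lemma inj_iff_not_cone {n : ℕ} (w : Fin n → ℂ) :
    (Function.Injective fun v : ℂ => fun k => (v * w k).re) ↔ w ∉ ComplexRealCone n := by
  constructor
  · intro hinj hmem
    obtain ⟨c, r, rfl⟩ := hmem
    rcases eq_or_ne c 0 with rfl | hc
    · have : (fun k => ((0:ℂ) * ((0:ℂ) • fun k => (r k : ℂ)) k).re)
          = fun k => ((1:ℂ) * ((0:ℂ) • fun k => (r k : ℂ)) k).re := by
        funext k; simp
      have := hinj this
      simp at this
    · have h0 : (fun k => ((Complex.I * (starRingEnd ℂ) c) * ((c • fun k => (r k : ℂ)) k)).re)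
          = fun k => ((0:ℂ) * ((c • fun k => (r k : ℂ)) k)).re := by
        funext k
        simp only [Pi.smul_apply, smul_eq_mul, Complex.ext_iff, Complex.mul_re, Complex.mul_im,
          Complex.zero_re, Complex.zero_im, Complex.I_re, Complex.I_im, Complex.conj_re,
          Complex.conj_im, Complex.ofReal_re, Complex.ofReal_im]
        ring
      have := hinj h0
      exact (mul_ne_zero Complex.I_ne_zero (by simpa using hc)) this
  · intro hmem v₁ v₂ hv
    by_contra hne
    apply hmem
    set v := v₁ - v₂ with hvdef
    have hv0 : v ≠ 0 := sub_ne_zero.mpr hne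
    have hre : ∀ k, (v * w k).re = 0 := by
      intro k
      have := congrFun hv k
      simp only [hvdef, sub_mul, Complex.sub_re]
      linarith [congrFun hv k]
    refine ⟨v⁻¹ * Complex.I, fun k => (v * w k).im, ?_⟩
    funext k
    have : (v * w k) = Complex.I * ((v * w k).im : ℝ) := by
      rw [Complex.ext_iff]
      constructor <;> simp [hre k]
    have hwk : w k = v⁻¹ * (v * w k) := by
      field_simp
    rw [Pi.smul_apply, smul_eq_mul]
    rw [hwk, this]
    ring

lemma hopf_iff {n : ℕ} (z : Fin n → ℂ) :
    ‖∑ k, (z k) ^ 2‖ < ∑ k, ‖z k‖ ^ 2 ↔ z ∉ ComplexRealCone n := by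
  classical
  set a : Fin n → ℝ := fun k => (z k).re with ha
  set b : Fin n → ℝ := fun k => (z k).im with hb
  set P : ℝ := ∑ k, a k ^ 2 with hP
  set Q : ℝ := ∑ k, b k ^ 2 with hQ
  set R : ℝ := ∑ k, a k * b k with hR
  have habs2 : (‖∑ k, (z k) ^ 2‖) ^ 2 = (P - Q) ^ 2 + (2 * R) ^ 2 := by
    rw [Complex.sq_norm, Complex.normSq_apply, Complex.re_sum, Complex.im_sum]
    have hre : ∑ k, ((z k) ^ 2).re = P - Q := by
      rw [hP, hQ, ← Finset.sum_sub_distrib]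
      congr 1; funext k; simp [pow_two, Complex.mul_re, ha, hb]
    have him : ∑ k, ((z k) ^ 2).im = 2 * R := by
      rw [hR, Finset.mul_sum]
      congr 1; funext k; simp [pow_two, Complex.mul_im, ha, hb]; ring
    rw [hre, him]; ring
  have hS : ∑ k, ‖z k‖ ^ 2 = P + Q := by
    rw [hP, hQ, ← Finset.sum_add_distrib]
    congr 1; funext k; rw [Complex.sq_norm, Complex.normSq_apply]; ring
  have hCS : R ^ 2 ≤ P * Q := Finset.sum_mul_sq_le_sq_mul_sq _ _ _
  have hPQ : 0 ≤ P + Q := by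
    apply add_nonneg <;> exact Finset.sum_nonneg fun k _ => sq_nonneg _
  have key : (‖∑ k, (z k) ^ 2‖ < ∑ k, ‖z k‖ ^ 2) ↔ R ^ 2 < P * Q := by
    rw [hS, ← pow_lt_pow_iff_left₀ (norm_nonneg _) hPQ two_ne_zero, habs2]
    constructor <;> intro h <;> nlinarith
  rw [key]
  constructor
  · intro h hmem
    obtain ⟨c, r, rfl⟩ := hmem
    have hak : ∀ k, a k = c.re * r k := by
      intro k; simp [ha, Pi.smul_apply, smul_eq_mul, Complex.mul_re]
    have hbk : ∀ k, b k = c.im * r k := by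
      intro k; simp [hb, Pi.smul_apply, smul_eq_mul, Complex.mul_im]
    have hPv : P = c.re ^ 2 * ∑ k, r k ^ 2 := by
      rw [hP, Finset.mul_sum]; congr 1; funext k; rw [hak k]; ring
    have hQv : Q = c.im ^ 2 * ∑ k, r k ^ 2 := by
      rw [hQ, Finset.mul_sum]; congr 1; funext k; rw [hbk k]; ring
    have hRv : R = (c.re * c.im) * ∑ k, r k ^ 2 := by
      rw [hR, Finset.mul_sum]; congr 1; funext k; rw [hak k, hbk k]; ring
    rw [hPv, hQv, hRv] at h
    nlinarith [h]
  · intro hmem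
    rcases lt_or_eq_of_le hCS with h | h
    · exact h
    exfalso; apply hmem
    rcases eq_or_ne P 0 with hP0 | hP0
    · have hak : ∀ k, (z k).re = 0 := by
        intro k
        have h0 := (Finset.sum_eq_zero_iff_of_nonneg
          (fun (k : Fin n) (_ : k ∈ Finset.univ) => sq_nonneg (a k))).mp (hP.symm.trans hP0) k
          (Finset.mem_univ k)
        simpa [ha] using pow_eq_zero_iff two_ne_zero |>.mp h0
      refine ⟨Complex.I, b, ?_⟩
      funext k
      apply Complex.ext <;>
        simp [hb, hak k, Complex.mul_re, Complex.mul_im]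
    · set t : ℝ := R / P with ht
      have hsum0 : ∑ k, (b k - t * a k) ^ 2 = 0 := by
        have expand : ∑ k, (b k - t * a k) ^ 2 = Q - 2 * t * R + t ^ 2 * P := by
          rw [hQ, hR, hP, Finset.mul_sum, Finset.mul_sum, ← Finset.sum_sub_distrib,
            ← Finset.sum_add_distrib]
          congr 1; funext k; ring
        rw [expand, ht]
        field_simp
        nlinarith [h]
      have hbk : ∀ k, b k = t * a k := by
        intro k
        have h0 := (Finset.sum_eq_zero_iff_of_nonneg
          (fun (k : Fin n) (_ : k ∈ Finset.univ) => sq_nonneg (b k - t * a k))).mp hsum0 k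
          (Finset.mem_univ k)
        have := pow_eq_zero_iff two_ne_zero |>.mp h0
        linarith [sub_eq_zero.mp this]
      have hbk' : ∀ k, (z k).im = t * (z k).re := by
        intro k; simpa [ha, hb] using hbk k
      refine ⟨1 + t * Complex.I, a, ?_⟩
      funext k
      apply Complex.ext
      · simp [ha, Complex.add_re, Complex.mul_re]
      · simp [ha, Complex.add_im, Complex.mul_im, hbk' k]

/-- The main analytic bridge: a harmonic map with `(1,0)`-differential `ω` is an immersion
at `x` if and only if `ω x` avoids `ℂ·ℝⁿ`. -/
lemma immersion_iff_not_cone {Mbar : Type*} [TopologicalSpace Mbar] [ChartedSpace ℂ Mbar]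
    {n : ℕ} (φ : Mbar → Fin n → ℝ) (ω : Mbar → Fin n → ℂ)
    (hφ : HarmonicWithDel φ ω (univ : Set Mbar)) (x : Mbar) :
    RealImmersionAt φ x ↔ ω x ∉ ComplexRealCone n := by
  obtain ⟨V, hV, u, hu, hdu, c, hc⟩ := hφ x (mem_univ x)
  rw [inter_univ] at hu hdu hc
  set e := chartAt ℂ x with he
  set z₀ := e x with hz₀
  have hu' : MDifferentiableAt 𝓘(ℂ, ℂ) 𝓘(ℂ, Fin n → ℂ) u x :=
    hu.mdifferentiableAt hV
  set g : ℂ → Fin n → ℂ := fun z => u (e.symm z) with hg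
  have hwr : writtenInExtChartAt 𝓘(ℂ, ℂ) 𝓘(ℂ, Fin n → ℂ) x u = g := by
    funext z
    simp [writtenInExtChartAt, hg, he, chartAt_self_eq]
  have hgdiff : DifferentiableAt ℂ g z₀ := by
    have := hu'.differentiableWithinAt_writtenInExtChartAt
    rw [hwr] at this
    simpa [differentiableWithinAt_univ] using this
  set w : Fin n → ℂ := fderiv ℂ g z₀ 1 with hw
  have hmder : mder u x = w := by
    rw [mder, hu'.mfderiv, hwr]
    simp [fderivWithin_univ]
    rfl
  have hω : (2:ℂ) • ω x = w := (hdu x (mem_of_mem_nhds hV)).trans hmder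
  have hgR : HasFDerivAt g ((fderiv ℂ g z₀).restrictScalars ℝ) z₀ :=
    (hgdiff.hasFDerivAt).restrictScalars ℝ
  set R : (Fin n → ℂ) →L[ℝ] (Fin n → ℝ) :=
    ContinuousLinearMap.pi (fun k => Complex.reCLM.comp (ContinuousLinearMap.proj k)) with hRdef
  set G : ℂ → Fin n → ℝ := fun z => R (g z) + c with hGdef
  have hG : HasFDerivAt G (R.comp ((fderiv ℂ g z₀).restrictScalars ℝ)) z₀ :=
    ((R.hasFDerivAt.comp z₀ hgR).add_const c)
  have hev : (fun z : ℂ => φ (e.symm z)) =ᶠ[𝓝 z₀] G := by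
    have hsymm : ContinuousAt e.symm z₀ := e.continuousAt_symm (mem_chart_target ℂ x)
    have hx : e.symm z₀ = x := e.left_inv (mem_chart_source ℂ x)
    have hVn : V ∈ 𝓝 (e.symm z₀) := by rw [hx]; exact hV
    filter_upwards [hsymm.preimage_mem_nhds hVn] with z hz
    funext k
    rw [hc _ hz k]
    simp [hGdef, hRdef, hg]
  have hfd : fderiv ℝ (fun z : ℂ => φ (e.symm z)) z₀
      = R.comp ((fderiv ℂ g z₀).restrictScalars ℝ) := by
    rw [hev.fderiv_eq, hG.fderiv]
  rw [RealImmersionAt, ← he, ← hz₀, hfd]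
  have hco : ⇑(R.comp ((fderiv ℂ g z₀).restrictScalars ℝ))
      = fun v : ℂ => fun k => (v * w k).re := by
    funext v k
    have : (fderiv ℂ g z₀) v = v • w := by
      conv_lhs => rw [show v = v • (1:ℂ) by simp]
      rw [map_smul, hw]
    simp [hRdef, this, smul_eq_mul]
  rw [hco, inj_iff_not_cone]
  rw [show w = (2:ℂ) • ω x from hω.symm, cone_smul_iff (by norm_num)]

/-- Section 5: if `A ∩ ℝⁿ = ∅` then every harmonic `A`-map is an immersion;
more generally, a harmonic map `φ` is an immersion iff `|𝔥_φ| < |∂φ|²` everywhere, where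
`𝔥_φ` is the Hopf differential, iff `∂φ/θ` avoids `ℂ·ℝⁿ` for any nowhere-vanishing
holomorphic 1-form `θ` on `M`. -/
theorem statement_18 {n : ℕ} (hn : 3 ≤ n) (A : Set (Fin n → ℂ))
    (hA : IsPuncturedCone A)
    -- `M` is an open Riemann surface
    {M : Type*} [TopologicalSpace M] [ChartedSpace ℂ M]
    [IsManifold 𝓘(ℂ, ℂ) (⊤ : ℕ∞) M] [ConnectedSpace M] [NoncompactSpace M] [T2Space M] :
    -- if `A ∩ ℝⁿ = ∅`, then every harmonic map `φ : M → ℝⁿ` whose `(1,0)`-differential is a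
    -- holomorphic section of `𝒜` is an immersion
    ((A ∩ {z : Fin n → ℂ | ∀ k, (z k).im = 0} = ∅) →
      ∀ (φ : M → Fin n → ℝ) (ω : M → Fin n → ℂ),
        HarmonicWithDel φ ω (univ : Set M) → (∀ x, ω x ∈ A) →
        ∀ x : M, RealImmersionAt φ x)
    ∧
    -- a harmonic map `φ` is an immersion iff `|𝔥_φ| < |∂φ|²` everywhere on `M`
    (∀ (φ : M → Fin n → ℝ) (ω : M → Fin n → ℂ),
      HarmonicWithDel φ ω (univ : Set M) →
      ((∀ x : M, RealImmersionAt φ x) ↔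
        ∀ x : M, ‖∑ k, (ω x k) ^ 2‖ < ∑ k, ‖ω x k‖ ^ 2))
    ∧
    -- equivalently, iff `∂φ/θ` takes values in `ℂⁿ ∖ (ℂ·ℝⁿ)` for any nowhere-vanishing
    -- holomorphic 1-form `θ` on `M`
    (∀ (φ : M → Fin n → ℝ) (ω : M → Fin n → ℂ),
      HarmonicWithDel φ ω (univ : Set M) →
      ∀ θ : M → ℂ, IsHolOneFormOn θ (univ : Set M) → (∀ x, θ x ≠ 0) →
      ((∀ x : M, RealImmersionAt φ x) ↔
        ∀ x : M, (θ x)⁻¹ • ω x ∉ ComplexRealCone n)) := by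
  
  refine ⟨?_, ?_, ?_⟩
  · intro hAR φ ω hharm hωA x
    rw [immersion_iff_not_cone φ ω hharm x]
    rintro ⟨cc, r, hzr⟩
    rcases eq_or_ne cc 0 with rfl | hcc
    · rw [zero_smul] at hzr
      exact hA.not_zero (hzr ▸ hωA x)
    · have hmem := hA.cone cc⁻¹ (inv_ne_zero hcc) _ (hωA x)
      rw [hzr, smul_smul, inv_mul_cancel₀ hcc, one_smul] at hmem
      exact eq_empty_iff_forall_notMem.mp hAR _ ⟨hmem, fun k => by simp⟩
  · intro φ ω hharm
    exact forall_congr' fun x =>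
      (immersion_iff_not_cone φ ω hharm x).trans (hopf_iff (ω x)).symm
  · intro φ ω hharm θ hθ hθne
    refine forall_congr' fun x => (immersion_iff_not_cone φ ω hharm x).trans ?_
    exact not_congr (cone_smul_iff (inv_ne_zero (hθne x))).symm
end
end
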